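/- Under the threshold model P(Y > y) = F(α(θ - δ(y))) with δ a strictly increasing bijection onto ℝ and F a continuous strictly increasing cdf with finite variance var_F, the variance of δ(Y) equals var_F/α², independent of θ. -/

import Mathlib

open MeasureTheory Set ProbabilityTheory

/-- A continuous CDF has no atoms: the measure of the open ray agrees with the closed ray. -/
lemma cdf_lt_eq {Ω₀ : Type*} [MeasurableSpace Ω₀] (μ₀ : Measure Ω₀) [IsProbabilityMeasure μ₀]
    (Y₀ : Ω₀ → ℝ) (F : ℝ → ℝ) (hFc : Continuous F)
    (hF : ∀ x, (μ₀ {ω | Y₀ ω ≤ x}).toReal = F x) (x : ℝ) :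
    (μ₀ {ω | Y₀ ω < x}).toReal = F x := by
  have hmono : Monotone (fun n : ℕ => {ω | Y₀ ω ≤ x - 1 / (n + 1)}) := by
    intro m n hmn ω (hω : Y₀ ω ≤ _)
    have : (1 : ℝ) / (n + 1) ≤ 1 / (m + 1) := by
      apply one_div_le_one_div_of_le (by positivity)
      exact_mod_cast add_le_add_left (Nat.cast_le.mpr hmn) 1
    simp only [mem_setOf_eq]
    linarith
  have hU : {ω | Y₀ ω < x} = ⋃ n : ℕ, {ω | Y₀ ω ≤ x - 1 / (n + 1)} := by
    ext ω
    simp only [mem_setOf_eq, mem_iUnion]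
    constructor
    · intro h
      obtain ⟨n, hn⟩ := exists_nat_one_div_lt (sub_pos.mpr h)
      exact ⟨n, by linarith⟩
    · rintro ⟨n, hn⟩
      have : (0 : ℝ) < 1 / (n + 1) := by positivity
      linarith
  have h1 : Filter.Tendsto (fun n : ℕ => μ₀ {ω | Y₀ ω ≤ x - 1 / (n + 1)}) Filter.atTop
      (nhds (μ₀ {ω | Y₀ ω < x})) := by
    rw [hU]; exact tendsto_measure_iUnion_atTop hmono
  have h2 : Filter.Tendsto (fun n : ℕ => (μ₀ {ω | Y₀ ω ≤ x - 1 / (n + 1)}).toReal) Filter.atTop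
      (nhds (μ₀ {ω | Y₀ ω < x}).toReal) :=
    (ENNReal.tendsto_toReal (measure_ne_top _ _)).comp h1
  have h3 : Filter.Tendsto (fun n : ℕ => (μ₀ {ω | Y₀ ω ≤ x - 1 / (n + 1)}).toReal) Filter.atTop
      (nhds (F x)) := by
    simp only [hF]
    have hx : Filter.Tendsto (fun n : ℕ => x - 1 / (n + 1 : ℝ)) Filter.atTop (nhds x) := by
      have := tendsto_one_div_add_atTop_nhds_zero_nat (𝕜 := ℝ)
      have := (tendsto_const_nhds (x := x) (f := Filter.atTop (α := ℕ))).sub this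
      simpa using this
    exact (hFc.tendsto x).comp hx
  exact tendsto_nhds_unique h2 h3

/-- Variance is invariant under adding a constant. -/
lemma variance_const_add' {Ω : Type*} [MeasurableSpace Ω] (μ : Measure Ω)
    [IsProbabilityMeasure μ] (X : Ω → ℝ) (hX : MemLp X 2 μ) (c : ℝ) :
    variance (fun ω => c + X ω) μ = variance X μ := by
  have hX' : MemLp (fun ω => c + X ω) 2 μ := (memLp_const c).add hX
  rw [variance_eq_integral hX'.aemeasurable, variance_eq_integral hX.aemeasurable]
  have hint : μ[fun ω => c + X ω] = c + μ[X] := by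
    rw [integral_add (integrable_const c) (hX.integrable one_le_two)]
    simp
  congr 1
  ext ω
  simp [hint]

/-- Under the threshold model `P(Y > y) = F (α (θ - d y))`, the variance of `d Y`
equals `var_F / α²`, independent of `θ`. -/
theorem variance_transformed (Ω : Type*) [MeasurableSpace Ω] (μ : Measure Ω)
    [IsProbabilityMeasure μ] (Y : Ω → ℝ) (hY : Measurable Y)
    (Ω₀ : Type*) [MeasurableSpace Ω₀] (μ₀ : Measure Ω₀) [IsProbabilityMeasure μ₀]
    (Y₀ : Ω₀ → ℝ) (hY₀ : Measurable Y₀) (hY₀sq : MemLp Y₀ 2 μ₀)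
    (F : ℝ → ℝ) (hFc : Continuous F) (hFm : StrictMono F)
    (hFrange : ∀ x, F x ∈ Ioo (0 : ℝ) 1)
    (hF : ∀ x, (μ₀ {ω | Y₀ ω ≤ x}).toReal = F x)
    (varF : ℝ) (hvarF : varF = variance Y₀ μ₀)
    (S : Set ℝ) (hSopen : IsOpen S) (hSconn : S.OrdConnected)
    (d : ℝ → ℝ) (hd : StrictMonoOn d S) (hdc : ContinuousOn d S) (hdS : d '' S = univ)
    (α θ : ℝ) (hα : 0 < α)
    (hYS : ∀ ω, Y ω ∈ S)
    (hsurv : ∀ y ∈ S, (μ {ω | y < Y ω}).toReal = F (α * (θ - d y)))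
    (hsq : MemLp (fun ω => d (Y ω)) 2 μ) :
    variance (fun ω => d (Y ω)) μ = varF / α ^ 2 := by
  set Z : Ω → ℝ := fun ω => d (Y ω) with hZdef
  set W : Ω₀ → ℝ := fun ω => θ + (-(1 / α)) * Y₀ ω with hWdef
  have hZaem : AEMeasurable Z μ := hsq.aestronglyMeasurable.aemeasurable
  have hWm : Measurable W := measurable_const.add (hY₀.const_mul _)
  have hWsq : MemLp W 2 μ₀ := (memLp_const θ).add (hY₀sq.const_mul _)
  -- survival function of Z
  have hZsurv : ∀ a : ℝ, (μ {ω | a < Z ω}).toReal = F (α * (θ - a)) := by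
    intro a
    obtain ⟨y, hyS, rfl⟩ : ∃ y ∈ S, d y = a := by
      have := hdS ▸ mem_univ a
      simpa [Set.mem_image] using this
    have hset : {ω | d y < Z ω} = {ω | y < Y ω} := by
      ext ω
      simp only [mem_setOf_eq, hZdef]
      exact (hd.lt_iff_lt hyS (hYS ω))
    rw [hset]; exact hsurv y hyS
  -- survival function of W
  have hWsurv : ∀ a : ℝ, (μ₀ {ω | a < W ω}).toReal = F (α * (θ - a)) := by
    intro a
    have hset : {ω | a < W ω} = {ω | Y₀ ω < α * (θ - a)} := by
      ext ω
      simp only [mem_setOf_eq, hWdef]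
      rw [show θ + -(1 / α) * Y₀ ω = θ - Y₀ ω / α by ring, lt_sub_comm, div_lt_iff₀ hα,
        mul_comm]
    rw [hset]
    exact cdf_lt_eq μ₀ Y₀ F hFc hF _
  -- equal laws
  have hmap : μ.map Z = μ₀.map W := by
    haveI : IsProbabilityMeasure (μ.map Z) := Measure.isProbabilityMeasure_map hZaem
    haveI : IsProbabilityMeasure (μ₀.map W) := Measure.isProbabilityMeasure_map hWm.aemeasurable
    refine MeasureTheory.Measure.ext_of_Iic _ _ fun a => ?_
    rw [Measure.map_apply_of_aemeasurable hZaem measurableSet_Iic,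
      Measure.map_apply_of_aemeasurable hWm.aemeasurable measurableSet_Iic]
    have hZc : Z ⁻¹' Iic a = {ω | a < Z ω}ᶜ := by
      ext ω; simp [not_lt]
    have hWc : W ⁻¹' Iic a = {ω | a < W ω}ᶜ := by
      ext ω; simp [not_lt]
    have hZn : NullMeasurableSet {ω | a < Z ω} μ :=
      hZaem.nullMeasurable measurableSet_Ioi
    have hWn : NullMeasurableSet {ω | a < W ω} μ₀ :=
      (hWm.nullMeasurable measurableSet_Ioi)
    rw [hZc, hWc, prob_compl_eq_one_sub₀ hZn, prob_compl_eq_one_sub₀ hWn]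
    congr 1
    rw [← ENNReal.ofReal_toReal (measure_ne_top μ _), ← ENNReal.ofReal_toReal (measure_ne_top μ₀ _),
      hZsurv a, hWsurv a]
  -- equal variances
  have hvar : variance Z μ = variance W μ₀ := by
    rw [variance_eq_sub hsq, variance_eq_sub hWsq]
    have h1 : μ[Z] = μ₀[W] := by
      have e1 : ∫ x, x ∂(μ.map Z) = μ[Z] := integral_map hZaem aestronglyMeasurable_id
      have e2 : ∫ x, x ∂(μ₀.map W) = μ₀[W] :=
        integral_map hWm.aemeasurable aestronglyMeasurable_id
      rw [← e1, ← e2, hmap]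
    have h2 : μ[Z ^ 2] = μ₀[W ^ 2] := by
      have hsm : AEStronglyMeasurable (fun x : ℝ => x ^ 2) (μ.map Z) :=
        (continuous_pow 2).aestronglyMeasurable
      have hsm' : AEStronglyMeasurable (fun x : ℝ => x ^ 2) (μ₀.map W) :=
        (continuous_pow 2).aestronglyMeasurable
      have e1 : ∫ x, x ^ 2 ∂(μ.map Z) = μ[Z ^ 2] := integral_map hZaem hsm
      have e2 : ∫ x, x ^ 2 ∂(μ₀.map W) = μ₀[W ^ 2] := integral_map hWm.aemeasurable hsm'
      rw [← e1, ← e2, hmap]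
    rw [h1, h2]
  rw [hvar, hWdef]
  rw [variance_const_add' μ₀ _ (hY₀sq.const_mul _) θ, variance_const_mul, hvarF]
  field_simp
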